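/- For every finite simple graph G with at least one vertex there exist a nonempty vertex subset S ⊆ V(G) and an edge subset E' ⊆ E(G) with both endpoints of every edge of E' in S, such that the graph (S, E') is connected, every vertex of S has even degree in (S, E'), and |E'| / |S| ≥ (|E(G)| + 1) / |V(G)| − 1. -/

import Mathlib

open SimpleGraph Finset

section Aux

variable {V : Type} [Fintype V] [DecidableEq V]

lemma cycle_even_filter {G' : SimpleGraph V} {v : V} {c : G'.Walk v v} (hc : c.IsCycle) (x : V) :
    Even ((c.edges.toFinset.filter (fun e => x ∈ e)).card) := by
  have h := (hc.isTrail.even_countP_edges_iff x).mpr (by simp)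
  have hnd : c.edges.Nodup := hc.isTrail.edges_nodup
  have h2 : (Finset.filter (fun e => x ∈ e) c.edges.toFinset)
      = (c.edges.filter (fun e => decide (x ∈ e))).toFinset := by
    ext e; simp [List.mem_filter]
  rwa [h2, List.card_toFinset, List.Nodup.dedup (hnd.filter _),
    ← List.countP_eq_length_filter]

lemma forest_bound (D : Finset (Sym2 V)) (hd : ∀ e ∈ D, ¬ e.IsDiag)
    (hac : (SimpleGraph.fromEdgeSet (D : Set (Sym2 V))).IsAcyclic) :
    D.card + Nat.card (SimpleGraph.fromEdgeSet (D : Set (Sym2 V))).ConnectedComponent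
      ≤ Fintype.card V := by
  classical
  induction D using Finset.strongInduction with
  | _ D ih =>
    rcases D.eq_empty_or_nonempty with rfl | ⟨e, he⟩
    · have hbot : SimpleGraph.fromEdgeSet ((∅ : Finset (Sym2 V)) : Set (Sym2 V)) = ⊥ := by
        simp
      rw [hbot]
      have hbij : Function.Bijective ((⊥ : SimpleGraph V).connectedComponentMk) := by
        constructor
        · intro a b hab
          exact reachable_bot.mp (ConnectedComponent.eq.mp hab)
        · exact fun c => c.ind fun v => ⟨v, rfl⟩
      rw [Finset.card_empty, ← Nat.card_congr (Equiv.ofBijective _ hbij), zero_add,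
        Nat.card_eq_fintype_card]
    · set H := SimpleGraph.fromEdgeSet (D : Set (Sym2 V)) with hH
      set D' := D.erase e with hD'
      set H' := SimpleGraph.fromEdgeSet (D' : Set (Sym2 V)) with hH'
      have hle : H' ≤ H := fromEdgeSet_mono (by exact_mod_cast Finset.erase_subset _ _)
      have hac' : H'.IsAcyclic := fun v c hc => hac (c.mapLe hle) (hc.mapLe hle)
      have hsd : H \ SimpleGraph.fromEdgeSet {e} = H' := by
        ext a b
        simp only [hH, hH', sdiff_adj, fromEdgeSet_adj, Finset.coe_erase, Set.mem_singleton_iff,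
          Set.mem_diff, Finset.mem_coe, Finset.mem_erase, hD']
        tauto
      -- e = s(u,v)
      obtain ⟨u, w, rfl⟩ : ∃ u w, s(u, w) = e := ⟨e.out.1, e.out.2, by
        rw [← Prod.mk.eta (p := e.out)]; exact e.out_eq⟩
      have hne : u ≠ w := by
        intro h; exact hd _ he (by simp [h])
      have hadj : H.Adj u w := by
        rw [hH, fromEdgeSet_adj]; exact ⟨he, hne⟩
      have hbr : ¬ H'.Reachable u w := by
        have := isBridge_iff.mp (isAcyclic_iff_forall_adj_isBridge.mp hac hadj)
        rwa [deleteEdges, hsd] at this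
      -- surjection between component types
      let φ : H'.ConnectedComponent → H.ConnectedComponent :=
        ConnectedComponent.map (Hom.ofLE hle)
      have hsurj : Function.Surjective φ := fun c => c.ind fun v => ⟨H'.connectedComponentMk v, rfl⟩
      have hninj : ¬ Function.Injective φ := by
        intro hinj
        have h1 : φ (H'.connectedComponentMk u) = φ (H'.connectedComponentMk w) := by
          show H.connectedComponentMk u = H.connectedComponentMk w
          exact ConnectedComponent.eq.mpr hadj.reachable
        exact hbr (ConnectedComponent.eq.mp (hinj h1))
      letI : Fintype H.ConnectedComponent := Fintype.ofFinite _
      letI : Fintype H'.ConnectedComponent := Fintype.ofFinite _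
      have hlt : Nat.card H.ConnectedComponent < Nat.card H'.ConnectedComponent := by
        rw [Nat.card_eq_fintype_card, Nat.card_eq_fintype_card]
        exact Fintype.card_lt_of_surjective_not_injective φ hsurj hninj
      have hIH := ih D' (Finset.erase_ssubset he) (fun e' he' => hd e' (Finset.mem_of_mem_erase he')) hac'
      have hcard : D.card = D'.card + 1 := (Finset.card_erase_add_one he).symm
      have hrfl : Nat.card (SimpleGraph.fromEdgeSet (D' : Set (Sym2 V))).ConnectedComponent
          = Nat.card H'.ConnectedComponent := rfl
      rw [hrfl] at hIH
      omega

lemma max_even (hV : Nonempty V) (E : Finset (Sym2 V)) (hnd : ∀ e ∈ E, ¬ e.IsDiag) :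
    ∃ F : Finset (Sym2 V), F ⊆ E ∧ (∀ v, Even ((F.filter (fun e => v ∈ e)).card)) ∧
      E.card + 1 ≤ F.card + Fintype.card V := by
  classical
  set Ps : Finset (Finset (Sym2 V)) :=
    E.powerset.filter (fun F => ∀ v, Even ((F.filter (fun e => v ∈ e)).card)) with hPs
  have hEmp : (∅ : Finset (Sym2 V)) ∈ Ps := by
    simp [hPs]
  obtain ⟨F, hFPs, hFmax⟩ := Finset.exists_max_image Ps Finset.card ⟨∅, hEmp⟩
  rw [hPs, Finset.mem_filter, Finset.mem_powerset] at hFPs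
  obtain ⟨hFE, hFeven⟩ := hFPs
  refine ⟨F, hFE, hFeven, ?_⟩
  set D := E \ F with hD
  have hndD : ∀ e ∈ D, ¬ e.IsDiag := fun e heD => hnd e (Finset.sdiff_subset heD)
  have hacD : (SimpleGraph.fromEdgeSet (D : Set (Sym2 V))).IsAcyclic := by
    intro v c hc
    set C := c.edges.toFinset with hC
    have hCD : C ⊆ D := by
      intro e heC
      rw [hC, List.mem_toFinset] at heC
      have := c.edges_subset_edgeSet heC
      rw [edgeSet_fromEdgeSet] at this
      exact this.1
    have hCcard : 0 < C.card := by
      rw [hC, List.toFinset_card_of_nodup hc.isTrail.edges_nodup, c.length_edges]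
      have := hc.three_le_length
      omega
    have hdisj : Disjoint F C := by
      rw [Finset.disjoint_left]
      intro e heF heC
      exact ((Finset.mem_sdiff.mp (hCD heC)).2) heF
    have hmem : F ∪ C ∈ Ps := by
      rw [hPs, Finset.mem_filter, Finset.mem_powerset]
      refine ⟨Finset.union_subset hFE (hCD.trans Finset.sdiff_subset), fun x => ?_⟩
      rw [Finset.filter_union, Finset.card_union_of_disjoint
        (Finset.disjoint_filter_filter hdisj)]
      exact (hFeven x).add (cycle_even_filter hc x)
    have hle := hFmax _ hmem
    rw [Finset.card_union_of_disjoint hdisj] at hle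
    omega
  have hfb := forest_bound D hndD hacD
  haveI : Nonempty (SimpleGraph.fromEdgeSet (D : Set (Sym2 V))).ConnectedComponent :=
    ⟨(SimpleGraph.fromEdgeSet (D : Set (Sym2 V))).connectedComponentMk hV.some⟩
  have hpos : 0 < Nat.card (SimpleGraph.fromEdgeSet (D : Set (Sym2 V))).ConnectedComponent :=
    Nat.card_pos
  have hsum : D.card + F.card = E.card := Finset.card_sdiff_add_card_eq_card hFE
  omega

end Aux

theorem stmt_8 {V : Type} [Fintype V] [DecidableEq V] (G : SimpleGraph V)
    (hV : 0 < Fintype.card V) :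
    ∃ (S : Finset V) (E' : Finset (Sym2 V)), S.Nonempty ∧
      (∀ e ∈ E', e ∈ G.edgeSet) ∧
      (∀ e ∈ E', ∀ v ∈ e, v ∈ S) ∧
      (∀ u ∈ S, ∀ v ∈ S,
        (SimpleGraph.fromEdgeSet (E' : Set (Sym2 V))).Reachable u v) ∧
      (∀ v ∈ S,
        Even (Nat.card ((SimpleGraph.fromEdgeSet (E' : Set (Sym2 V))).neighborSet v))) ∧
      ((Nat.card G.edgeSet : ℝ) + 1) / (Fintype.card V : ℝ) - 1 ≤
        (E'.card : ℝ) / (S.card : ℝ) := by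
  classical
  have hVne : Nonempty V := Fintype.card_pos_iff.mp hV
  obtain ⟨F, hFE, hFeven, hcard⟩ := max_even hVne G.edgeFinset
    (fun e he => G.not_isDiag_of_mem_edgeFinset he)
  set H := SimpleGraph.fromEdgeSet (F : Set (Sym2 V)) with hH
  have hndF : ∀ e ∈ F, ¬ e.IsDiag := fun e he => G.not_isDiag_of_mem_edgeFinset (hFE he)
  have hadjF : ∀ e ∈ F, ∀ x ∈ e, ∀ y ∈ e,
      H.connectedComponentMk x = H.connectedComponentMk y := by
    intro e he x hx y hy
    obtain ⟨u, w, rfl⟩ : ∃ u w, s(u, w) = e := ⟨e.out.1, e.out.2, by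
      rw [← Prod.mk.eta (p := e.out)]; exact e.out_eq⟩
    have hne : u ≠ w := by intro h; exact hndF _ he (by simp [h])
    have hadj : H.Adj u w := by rw [hH, fromEdgeSet_adj]; exact ⟨he, hne⟩
    have hmk : H.connectedComponentMk u = H.connectedComponentMk w :=
      SimpleGraph.ConnectedComponent.sound hadj.reachable
    rw [Sym2.mem_iff] at hx hy
    rcases hx with rfl | rfl <;> rcases hy with rfl | rfl <;>
      first | rfl | exact hmk | exact hmk.symm
  letI : Fintype H.ConnectedComponent := Fintype.ofFinite _
  set f : Sym2 V → H.ConnectedComponent := fun e => H.connectedComponentMk e.out.1 with hfdef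
  have hf : ∀ e ∈ F, ∀ x ∈ e, H.connectedComponentMk x = f e :=
    fun e he x hx => hadjF e he x hx e.out.1 (Sym2.out_fst_mem e)
  have hSsum : ∑ c : H.ConnectedComponent,
      (univ.filter (fun v => H.connectedComponentMk v = c)).card = Fintype.card V := by
    rw [← Finset.card_univ]
    exact (Finset.card_eq_sum_card_fiberwise (fun x _ => Finset.mem_univ _)).symm
  have hEsum : ∑ c : H.ConnectedComponent,
      (F.filter (fun e => f e = c)).card = F.card :=
    (Finset.card_eq_sum_card_fiberwise (fun x _ => Finset.mem_univ _)).symm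
  have hm : Nat.card G.edgeSet = G.edgeFinset.card := by
    rw [Nat.card_coe_set_eq, Set.ncard_eq_toFinset_card']
    exact congrArg Finset.card (by ext e; simp)
  set n := Fintype.card V with hn
  set m := G.edgeFinset.card with hmm
  set r : ℝ := ((m : ℝ) + 1) / (n : ℝ) - 1 with hr
  have hn0 : (0 : ℝ) < (n : ℝ) := by exact_mod_cast hV
  have hrn : r * (n : ℝ) ≤ (F.card : ℝ) := by
    have h1 : (m : ℝ) + 1 ≤ (F.card : ℝ) + (n : ℝ) := by exact_mod_cast hcard
    have h2 : r * (n : ℝ) = ((m : ℝ) + 1) - (n : ℝ) := by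
      rw [hr, sub_mul, div_mul_cancel₀ _ hn0.ne', one_mul]
    linarith
  haveI : Nonempty H.ConnectedComponent := ⟨H.connectedComponentMk hVne.some⟩
  have hpig : ∃ c : H.ConnectedComponent,
      r * (((univ.filter (fun v => H.connectedComponentMk v = c)).card : ℕ) : ℝ)
        ≤ (((F.filter (fun e => f e = c)).card : ℕ) : ℝ) := by
    by_contra hcon
    push_neg at hcon
    have hlt := Finset.sum_lt_sum_of_nonempty (Finset.univ_nonempty)
      (fun c _ => hcon c)
    have h1 : ∑ c : H.ConnectedComponent, (((F.filter (fun e => f e = c)).card : ℕ) : ℝ)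
        = (F.card : ℝ) := by rw [← Nat.cast_sum, hEsum]
    have h2 : ∑ c : H.ConnectedComponent,
        r * (((univ.filter (fun v => H.connectedComponentMk v = c)).card : ℕ) : ℝ)
        = r * (n : ℝ) := by rw [← Finset.mul_sum, ← Nat.cast_sum, hSsum]
    rw [h1, h2] at hlt
    linarith
  obtain ⟨c, hcineq⟩ := hpig
  set S : Finset V := univ.filter (fun v => H.connectedComponentMk v = c) with hS
  set E' : Finset (Sym2 V) := F.filter (fun e => f e = c) with hE'
  have hmemS : ∀ v, v ∈ S ↔ H.connectedComponentMk v = c := by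
    intro v; simp [hS]
  have hSne : S.Nonempty := by
    obtain ⟨v, hv⟩ := c.exists_rep
    exact ⟨v, (hmemS v).mpr hv⟩
  have hE'F : E' ⊆ F := Finset.filter_subset _ _
  have hkey : ∀ e ∈ E', ∀ x ∈ e, x ∈ S := by
    intro e he x hx
    rw [hE', Finset.mem_filter] at he
    rw [hmemS, hf e he.1 x hx, he.2]
  refine ⟨S, E', hSne, ?_, hkey, ?_, ?_, ?_⟩
  · exact fun e he => mem_edgeFinset.mp (hFE (hE'F he))
  · -- reachability
    intro u hu v hv
    have hru : H.Reachable u v := by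
      rw [← ConnectedComponent.eq]
      rw [hmemS] at hu hv
      rw [hu, hv]
    obtain ⟨p⟩ := hru
    have hpe : ∀ e ∈ p.edges, e ∈ (SimpleGraph.fromEdgeSet (E' : Set (Sym2 V))).edgeSet := by
      intro e hep
      have heH : e ∈ H.edgeSet := p.edges_subset_edgeSet hep
      rw [hH, edgeSet_fromEdgeSet] at heH
      obtain ⟨heF, hnd⟩ := heH
      rw [Finset.mem_coe] at heF
      obtain ⟨a, b, rfl⟩ : ∃ a b, s(a, b) = e := ⟨e.out.1, e.out.2, by
        rw [← Prod.mk.eta (p := e.out)]; exact e.out_eq⟩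
      have has : a ∈ p.support := p.fst_mem_support_of_mem_edges hep
      have hra : H.Reachable u a := ⟨p.takeUntil a has⟩
      have hmka : H.connectedComponentMk a = c := by
        rw [← ConnectedComponent.eq.mpr hra]
        exact (hmemS u).mp hu
      have hfe : f s(a, b) = c := by
        rw [← hf _ heF a (Sym2.mem_mk_left a b), hmka]
      rw [edgeSet_fromEdgeSet]
      exact ⟨Finset.mem_coe.mpr (Finset.mem_filter.mpr ⟨heF, hfe⟩), hnd⟩
    exact ⟨p.transfer _ hpe⟩
  · -- even degrees
    intro v hv
    have hNS : (SimpleGraph.fromEdgeSet (E' : Set (Sym2 V))).neighborSet v = H.neighborSet v := by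
      ext w
      simp only [mem_neighborSet, fromEdgeSet_adj, Finset.mem_coe, hH]
      constructor
      · rintro ⟨he, hne⟩
        exact ⟨hE'F he, hne⟩
      · rintro ⟨he, hne⟩
        refine ⟨Finset.mem_filter.mpr ⟨he, ?_⟩, hne⟩
        rw [← hf _ he v (Sym2.mem_mk_left v w)]
        exact (hmemS v).mp hv
    rw [hNS]
    have hcardeq : Nat.card (H.neighborSet v) = (F.filter (fun e => v ∈ e)).card := by
      have hbij : Function.Bijective (fun w : H.neighborSet v =>
          (⟨s(v, w.1), Finset.mem_filter.mpr ⟨by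
            have h2 : H.Adj v w.1 := w.2
            simp only [hH, fromEdgeSet_adj, Finset.mem_coe] at h2
            exact h2.1, Sym2.mem_mk_left v w.1⟩⟩ :
            {e // e ∈ F.filter (fun e => v ∈ e)})) := by
        constructor
        · intro w1 w2 hw
          have h3 : s(v, (w1 : V)) = s(v, (w2 : V)) := congrArg Subtype.val hw
          exact Subtype.ext (Sym2.congr_right.mp h3)
        · rintro ⟨e, he⟩
          rw [Finset.mem_filter] at he
          obtain ⟨heF, hve⟩ := he
          have hother : Sym2.Mem.other hve ≠ v := Sym2.other_ne (hndF e heF) hve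
          refine ⟨⟨Sym2.Mem.other hve, ?_⟩, ?_⟩
          · show H.Adj v _
            simp only [hH, fromEdgeSet_adj, Finset.mem_coe]
            refine ⟨?_, hother.symm⟩
            rw [Sym2.other_spec hve]
            exact heF
          · exact Subtype.ext (Sym2.other_spec hve)
      rw [Nat.card_congr (Equiv.ofBijective _ hbij)]
      rw [Nat.card_eq_fintype_card]
      exact Fintype.card_coe _
    rw [hcardeq]
    exact hFeven v
  · -- inequality
    have hS0 : (0 : ℝ) < (S.card : ℝ) := by exact_mod_cast hSne.card_pos
    rw [hm]
    rw [le_div_iff₀ hS0]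
    exact hcineq
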